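/- Let 1 < β < 2, let N ≥ 2 be an integer and h > 0. Then for every grid function v, one has (δ^β_{x,+} v, v) = (δ^β_{x,-} v, v) and (δ^β_{x,+} v, v) ≤ (h^{-β} Σ_{k=0}^{N-1} ω_k^{(β)}) · ‖v‖². -/

import Mathlib

open Finset

/-- The coefficients `g_k^{(γ)}`: `g_0 = 1`, `g_k = (1 - (γ+1)/k) g_{k-1}` for `k ≥ 1`. -/
noncomputable def gcoef (γ : ℝ) : ℕ → ℝ
  | 0 => 1
  | k + 1 => (1 - (γ + 1) / (k + 1)) * gcoef γ k

/-- The coefficients `ω_k^{(γ)}`: `ω_0 = (γ/2) g_0` and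
`ω_k = (γ/2) g_k + ((2-γ)/2) g_{k-1}` for `k ≥ 1`. -/
noncomputable def wcoef (γ : ℝ) : ℕ → ℝ
  | 0 => γ / 2 * gcoef γ 0
  | k + 1 => γ / 2 * gcoef γ (k + 1) + (2 - γ) / 2 * gcoef γ k

/-- Discrete inner product `(u,v) = h ∑_{i=1}^{N-1} u_i v_i`. -/
noncomputable def ip (N : ℕ) (h : ℝ) (u v : ℕ → ℝ) : ℝ :=
  h * ∑ i ∈ Finset.Icc 1 (N - 1), u i * v i

/-- Discrete `L₂`-norm `‖v‖ = √(v,v)`. -/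
noncomputable def gnorm (N : ℕ) (h : ℝ) (v : ℕ → ℝ) : ℝ :=
  Real.sqrt (ip N h v v)

/-- `(δ^γ_{x,+} v)_i = h^{-γ} ∑_{k=0}^{i+1} ω_k^{(γ)} v_{i-k+1}`. -/
noncomputable def dplus (γ : ℝ) (h : ℝ) (v : ℕ → ℝ) (i : ℕ) : ℝ :=
  h ^ (-γ) * ∑ k ∈ Finset.range (i + 2), wcoef γ k * v (i + 1 - k)

/-- `(δ^γ_{x,-} v)_i = h^{-γ} ∑_{k=0}^{N-i+1} ω_k^{(γ)} v_{i+k-1}`. -/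
noncomputable def dminus (γ : ℝ) (N : ℕ) (h : ℝ) (v : ℕ → ℝ) (i : ℕ) : ℝ :=
  h ^ (-γ) * ∑ k ∈ Finset.range (N - i + 2), wcoef γ k * v (i + k - 1)

lemma gcoef_nonneg {β : ℝ} (hβ1 : 1 < β) (hβ2 : β < 2) : ∀ k, 2 ≤ k → 0 ≤ gcoef β k := by
  intro k hk
  induction k with
  | zero => omega
  | succ n ih =>
    rcases Nat.lt_or_ge n 2 with hn | hn
    · interval_cases n
      · omega
      · show (0:ℝ) ≤ gcoef β 2
        simp only [gcoef]
        push_cast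
        nlinarith
    · have h0 := ih hn
      show (0:ℝ) ≤ (1 - (β + 1) / (n + 1)) * gcoef β n
      apply mul_nonneg _ h0
      have hn' : (2:ℝ) ≤ (n:ℝ) := by exact_mod_cast hn
      have hd : (β + 1) / ((n:ℝ) + 1) ≤ 1 := by
        rw [div_le_one (by linarith)]
        linarith
      linarith

lemma wcoef_zero_nonneg {β : ℝ} (hβ1 : 1 < β) : 0 ≤ wcoef β 0 := by
  simp only [wcoef, gcoef]; nlinarith

lemma wcoef_nonneg {β : ℝ} (hβ1 : 1 < β) (hβ2 : β < 2) : ∀ k, 3 ≤ k → 0 ≤ wcoef β k := by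
  intro k hk
  obtain ⟨n, rfl⟩ : ∃ n, k = n + 1 := ⟨k - 1, by omega⟩
  show (0:ℝ) ≤ β / 2 * gcoef β (n + 1) + (2 - β) / 2 * gcoef β n
  have h1 := gcoef_nonneg hβ1 hβ2 (n+1) (by omega)
  have h2 := gcoef_nonneg hβ1 hβ2 n (by omega)
  nlinarith

lemma wcoef02 {β : ℝ} (hβ1 : 1 < β) (hβ2 : β < 2) : 0 ≤ wcoef β 0 + wcoef β 2 := by
  show (0:ℝ) ≤ β / 2 * gcoef β 0 + (β / 2 * gcoef β 2 + (2 - β) / 2 * gcoef β 1)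
  simp only [gcoef]
  push_cast
  nlinarith [sq_nonneg β, sq_nonneg (β-1)]

theorem stmt13 (β : ℝ) (hβ1 : 1 < β) (hβ2 : β < 2) (N : ℕ) (hN : 2 ≤ N)
    (h : ℝ) (hh : 0 < h) (v : ℕ → ℝ) (hv0 : v 0 = 0) (hvN : v N = 0) :
    ip N h (dplus β h v) v = ip N h (dminus β N h v) v ∧
    ip N h (dplus β h v) v ≤
      (h ^ (-β) * ∑ k ∈ Finset.range N, wcoef β k) * (gnorm N h v) ^ 2 := by
  have hw0 : 0 ≤ wcoef β 0 := wcoef_zero_nonneg hβ1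
  have hw02 : 0 ≤ wcoef β 0 + wcoef β 2 := wcoef02 hβ1 hβ2
  set I : Finset ℕ := Finset.Icc 1 (N - 1) with hIdef
  set C : ℕ → ℝ := fun k => ∑ i ∈ I, v (i + 1 - k) * v i with hCdef
  set D : ℕ → ℝ := fun k => ∑ i ∈ I, (if i + k ≤ N + 1 then v (i + k - 1) else 0) * v i
    with hDdef
  set Q : ℝ := ∑ i ∈ I, v i * v i with hQdef
  have hQnn : 0 ≤ Q := Finset.sum_nonneg fun i _ => mul_self_nonneg _
  -- filtered representation of C
  have hCf : ∀ k, C k = ∑ i ∈ I.filter (fun i => k ≤ i ∧ i + 1 - k ≤ N - 1),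
      v (i + 1 - k) * v i := by
    intro k
    refine (Finset.sum_filter_of_ne ?_).symm
    intro i hi hne
    rw [hIdef, Finset.mem_Icc] at hi
    by_contra hc
    have : i + 1 - k = 0 ∨ i + 1 - k = N := by omega
    rcases this with h' | h' <;> rw [h'] at hne
    · rw [hv0, zero_mul] at hne; exact hne rfl
    · rw [hvN, zero_mul] at hne; exact hne rfl
  -- C k ≤ Q
  have hCle : ∀ k, C k ≤ Q := by
    intro k
    have hT : (∑ i ∈ I, v (i + 1 - k) * v (i + 1 - k)) ≤ Q := by
      have e1 : ∑ i ∈ I, v (i + 1 - k) * v (i + 1 - k)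
          = ∑ i ∈ I.filter (fun i => k ≤ i ∧ i + 1 - k ≤ N - 1),
            v (i + 1 - k) * v (i + 1 - k) := by
        refine (Finset.sum_filter_of_ne ?_).symm
        intro i hi hne
        rw [hIdef, Finset.mem_Icc] at hi
        by_contra hc
        have : i + 1 - k = 0 ∨ i + 1 - k = N := by omega
        rcases this with h' | h' <;> rw [h'] at hne
        · rw [hv0, zero_mul] at hne; exact hne rfl
        · rw [hvN, zero_mul] at hne; exact hne rfl
      have hinj : ∀ x ∈ I.filter (fun i => k ≤ i ∧ i + 1 - k ≤ N - 1),
          ∀ y ∈ I.filter (fun i => k ≤ i ∧ i + 1 - k ≤ N - 1),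
          x + 1 - k = y + 1 - k → x = y := by
        intro x hx y hy hxy
        simp only [Finset.mem_filter] at hx hy
        omega
      have e2 := (Finset.sum_image (f := fun j => v j * v j)
        (g := fun i => i + 1 - k) hinj).symm
      have e3 : (I.filter (fun i => k ≤ i ∧ i + 1 - k ≤ N - 1)).image
          (fun i => i + 1 - k) ⊆ I := by
        intro j hj
        simp only [Finset.mem_image, Finset.mem_filter, hIdef, Finset.mem_Icc] at hj ⊢
        obtain ⟨i, ⟨⟨hi1, hi2⟩, hk, hle⟩, rfl⟩ := hj
        omega
      rw [e1, e2]
      exact Finset.sum_le_sum_of_subset_of_nonneg e3 fun j _ _ => mul_self_nonneg _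
    have step : C k ≤ ((∑ i ∈ I, v (i + 1 - k) * v (i + 1 - k)) + Q) / 2 := by
      rw [hCdef, hQdef]
      simp only
      rw [← Finset.sum_add_distrib, Finset.sum_div]
      apply Finset.sum_le_sum
      intro i _
      nlinarith [sq_nonneg (v (i + 1 - k) - v i)]
    linarith
  have hC1 : C 1 = Q := by
    rw [hCdef, hQdef]
    simp
  have hCN : C N = 0 := by
    rw [hCdef]
    apply Finset.sum_eq_zero
    intro i hi
    rw [hIdef, Finset.mem_Icc] at hi
    rw [show i + 1 - N = 0 by omega, hv0, zero_mul]
  -- D k = C k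
  have hDC : ∀ k, D k = C k := by
    intro k
    have hDf : D k = ∑ i ∈ I.filter (fun i => 2 ≤ i + k ∧ i + k ≤ N),
        v (i + k - 1) * v i := by
      rw [hDdef]
      simp only
      rw [← Finset.sum_filter_of_ne (p := fun i => 2 ≤ i + k ∧ i + k ≤ N) ?_]
      · apply Finset.sum_congr rfl
        intro i hi
        simp only [Finset.mem_filter] at hi
        rw [if_pos (by omega)]
      · intro i hi hne
        rw [hIdef, Finset.mem_Icc] at hi
        by_contra hc
        apply hne
        rcases Nat.lt_or_ge (i + k) 2 with h1 | h1
        · rw [if_pos (by omega), show i + k - 1 = 0 by omega, hv0, zero_mul]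
        · rcases Nat.lt_or_ge (N + 1) (i + k) with h3 | h3
          · rw [if_neg (by omega), zero_mul]
          · rw [if_pos (by omega), show i + k - 1 = N by omega, hvN, zero_mul]
    rw [hDf, hCf k]
    refine Finset.sum_nbij' (fun i => i + k - 1) (fun j => j + 1 - k) ?_ ?_ ?_ ?_ ?_
    · intro a ha
      simp only [Finset.mem_filter, hIdef, Finset.mem_Icc] at ha ⊢
      omega
    · intro b hb
      simp only [Finset.mem_filter, hIdef, Finset.mem_Icc] at hb ⊢
      omega
    · intro a ha
      simp only [Finset.mem_filter, hIdef, Finset.mem_Icc] at ha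
      show a + k - 1 + 1 - k = a
      omega
    · intro b hb
      simp only [Finset.mem_filter, hIdef, Finset.mem_Icc] at hb
      show b + 1 - k + k - 1 = b
      omega
    · intro a ha
      simp only [Finset.mem_filter, hIdef, Finset.mem_Icc] at ha
      rw [show a + k - 1 + 1 - k = a by omega]
      ring
  have hC02 : C 0 = C 2 := by
    rw [← hDC 0, hDdef, hCdef]
    simp only
    apply Finset.sum_congr rfl
    intro i hi
    rw [hIdef, Finset.mem_Icc] at hi
    rw [if_pos (by omega), show i + 0 - 1 = i + 1 - 2 by omega]
  -- representation of the plus inner product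
  have hplus : ip N h (dplus β h v) v
      = h * (h ^ (-β) * ∑ k ∈ Finset.range (N + 1), wcoef β k * C k) := by
    simp only [ip, ← hIdef]
    congr 1
    have e1 : ∀ i ∈ I, dplus β h v i * v i
        = (h ^ (-β) * ∑ k ∈ Finset.range (N + 1), wcoef β k * v (i + 1 - k)) * v i := by
      intro i hi
      rw [hIdef, Finset.mem_Icc] at hi
      rw [dplus]
      congr 2
      apply Finset.sum_subset
      · exact Finset.range_subset_range.2 (by omega)
      · intro k _ hk
        simp only [Finset.mem_range, not_lt] at hk
        rw [show i + 1 - k = 0 by omega, hv0, mul_zero]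
    rw [Finset.sum_congr rfl e1]
    have e2 : ∀ i, (h ^ (-β) * ∑ k ∈ Finset.range (N + 1), wcoef β k * v (i + 1 - k)) * v i
        = ∑ k ∈ Finset.range (N + 1), h ^ (-β) * (wcoef β k * v (i + 1 - k) * v i) := by
      intro i
      rw [Finset.mul_sum, Finset.sum_mul]
      exact Finset.sum_congr rfl fun k _ => by ring
    rw [Finset.sum_congr rfl fun i _ => e2 i, Finset.sum_comm, Finset.mul_sum]
    apply Finset.sum_congr rfl
    intro k _
    rw [hCdef]
    simp only
    rw [Finset.mul_sum, Finset.mul_sum]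
    exact Finset.sum_congr rfl fun i _ => by ring
  -- representation of the minus inner product
  have hminus : ip N h (dminus β N h v) v
      = h * (h ^ (-β) * ∑ k ∈ Finset.range (N + 1), wcoef β k * D k) := by
    simp only [ip, ← hIdef]
    congr 1
    have e1 : ∀ i ∈ I, dminus β N h v i * v i
        = (h ^ (-β) * ∑ k ∈ Finset.range (N + 1),
            wcoef β k * (if i + k ≤ N + 1 then v (i + k - 1) else 0)) * v i := by
      intro i hi
      rw [hIdef, Finset.mem_Icc] at hi
      rw [dminus]
      congr 2
      have a1 : ∑ k ∈ Finset.range (N - i + 2), wcoef β k * v (i + k - 1)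
          = ∑ k ∈ Finset.range (N - i + 2),
              wcoef β k * (if i + k ≤ N + 1 then v (i + k - 1) else 0) := by
        apply Finset.sum_congr rfl
        intro k hk
        rw [Finset.mem_range] at hk
        rw [if_pos (by omega)]
      rw [a1]
      apply Finset.sum_subset
      · exact Finset.range_subset_range.2 (by omega)
      · intro k _ hk
        simp only [Finset.mem_range, not_lt] at hk
        rw [if_neg (by omega), mul_zero]
    rw [Finset.sum_congr rfl e1]
    have e2 : ∀ i, (h ^ (-β) * ∑ k ∈ Finset.range (N + 1),
          wcoef β k * (if i + k ≤ N + 1 then v (i + k - 1) else 0)) * v i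
        = ∑ k ∈ Finset.range (N + 1),
            h ^ (-β) * (wcoef β k * ((if i + k ≤ N + 1 then v (i + k - 1) else 0) * v i)) := by
      intro i
      rw [Finset.mul_sum, Finset.sum_mul]
      exact Finset.sum_congr rfl fun k _ => by ring
    rw [Finset.sum_congr rfl fun i _ => e2 i, Finset.sum_comm, Finset.mul_sum]
    apply Finset.sum_congr rfl
    intro k _
    rw [hDdef]
    simp only
    rw [Finset.mul_sum, Finset.mul_sum]
    try exact Finset.sum_congr rfl fun i _ => by ring
  -- the key inequality
  have hSle : ∑ k ∈ Finset.range (N + 1), wcoef β k * C k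
      ≤ (∑ k ∈ Finset.range N, wcoef β k) * Q := by
    rw [Finset.sum_range_succ, hCN, mul_zero, add_zero]
    rcases eq_or_lt_of_le hN with hN2 | hN3
    · rw [← hN2]
      simp only [Finset.sum_range_succ, Finset.sum_range_zero, zero_add]
      rw [hC1]
      have := mul_le_mul_of_nonneg_left (hCle 0) hw0
      nlinarith
    · have h3N : 3 ≤ N := hN3
      rw [Finset.range_eq_Ico,
        ← Finset.sum_Ico_consecutive (fun k => wcoef β k * C k) (Nat.zero_le 3) h3N,
        ← Finset.sum_Ico_consecutive (fun k => wcoef β k) (Nat.zero_le 3) h3N]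
      have hIco3 : ∀ f : ℕ → ℝ, ∑ k ∈ Finset.Ico 0 3, f k = f 0 + f 1 + f 2 := by
        intro f
        rw [Nat.Ico_zero_eq_range]
        simp [Finset.sum_range_succ]
      rw [hIco3, hIco3]
      have htail : ∑ k ∈ Finset.Ico 3 N, wcoef β k * C k
          ≤ ∑ k ∈ Finset.Ico 3 N, wcoef β k * Q := by
        apply Finset.sum_le_sum
        intro k hk
        rw [Finset.mem_Ico] at hk
        exact mul_le_mul_of_nonneg_left (hCle k) (wcoef_nonneg hβ1 hβ2 k hk.1)
      have hhead : wcoef β 0 * C 0 + wcoef β 1 * C 1 + wcoef β 2 * C 2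
          ≤ (wcoef β 0 + wcoef β 1 + wcoef β 2) * Q := by
        rw [hC1, ← hC02]
        have := mul_le_mul_of_nonneg_left (hCle 0) hw02
        nlinarith
      have hQmul : ∑ k ∈ Finset.Ico 3 N, wcoef β k * Q
          = (∑ k ∈ Finset.Ico 3 N, wcoef β k) * Q := (Finset.sum_mul _ _ _).symm
      rw [add_mul]
      linarith
  constructor
  · rw [hplus, hminus]
    congr 2
    exact Finset.sum_congr rfl fun k _ => by rw [hDC k]
  · rw [hplus]
    have hg : (gnorm N h v) ^ 2 = h * Q := by
      rw [gnorm, Real.sq_sqrt]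
      · rw [ip, ← hIdef, hQdef]
      · rw [ip]
        exact mul_nonneg hh.le (Finset.sum_nonneg fun i _ => mul_self_nonneg _)
    rw [hg]
    have hrp : (0:ℝ) < h ^ (-β) := Real.rpow_pos_of_pos hh _
    calc h * (h ^ (-β) * ∑ k ∈ Finset.range (N + 1), wcoef β k * C k)
        = (h * h ^ (-β)) * ∑ k ∈ Finset.range (N + 1), wcoef β k * C k := by ring
      _ ≤ (h * h ^ (-β)) * ((∑ k ∈ Finset.range N, wcoef β k) * Q) :=
          mul_le_mul_of_nonneg_left hSle (mul_pos hh hrp).le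
      _ = (h ^ (-β) * ∑ k ∈ Finset.range N, wcoef β k) * (h * Q) := by ring
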